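/- For a BSC with crossover probability p ∈ [0,1], the symmetric capacity I and the Bhattacharyya parameter Z = 2√(p(1−p)) satisfy I + Z ≥ 1. -/

import Mathlib

/-- The binary entropy function (in bits). -/
noncomputable def binEnt (p : ℝ) : ℝ :=
  -p * Real.logb 2 p - (1 - p) * Real.logb 2 (1 - p)

open Real Set

noncomputable def auxF (p : ℝ) : ℝ := 2 * Real.log 2 * Real.sqrt (p*(1-p)) - Real.binEntropy p

noncomputable def auxF1 (p : ℝ) : ℝ :=
  Real.log 2 * (1 - 2*p) / Real.sqrt (p*(1-p)) - (Real.log (1-p) - Real.log p)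

noncomputable def auxD (p : ℝ) : ℝ :=
  (2 * Real.sqrt (p*(1-p)) - Real.log 2) / (2 * (p*(1-p)) * Real.sqrt (p*(1-p)))

/-- The threshold point where the second derivative changes sign. -/
noncomputable def auxP0 : ℝ := (1 - Real.sqrt (1 - Real.log 2 ^ 2)) / 2

lemma log_two_lt_one : Real.log 2 < 1 := by
  have := Real.log_two_lt_d9; linarith

lemma auxR_sq : Real.sqrt (1 - Real.log 2 ^ 2) ^ 2 = 1 - Real.log 2 ^ 2 :=
  Real.sq_sqrt (by nlinarith [Real.log_pos one_lt_two, log_two_lt_one])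

lemma auxR_pos : 0 < Real.sqrt (1 - Real.log 2 ^ 2) :=
  Real.sqrt_pos.2 (by nlinarith [Real.log_pos one_lt_two, log_two_lt_one])

lemma auxR_lt_one : Real.sqrt (1 - Real.log 2 ^ 2) < 1 := by
  nlinarith [auxR_sq, auxR_pos, Real.log_pos one_lt_two,
    sq_nonneg (Real.sqrt (1 - Real.log 2 ^ 2) - 1)]

lemma auxP0_pos : 0 < auxP0 := by unfold auxP0; linarith [auxR_lt_one]

lemma auxP0_lt_half : auxP0 < 2⁻¹ := by unfold auxP0; have := auxR_pos; norm_num; linarith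

lemma hasDerivAt_auxF (p : ℝ) (h0 : 0 < p) (h1 : p < 1) : HasDerivAt auxF (auxF1 p) p := by
  have hs : 0 < Real.sqrt (p*(1-p)) := Real.sqrt_pos.2 (by nlinarith)
  have hpoly : HasDerivAt (fun p : ℝ => p*(1-p)) (1-2*p) p := by
    have := (hasDerivAt_id p).mul ((hasDerivAt_const p (1:ℝ)).sub (hasDerivAt_id p))
    refine this.congr_deriv (Eq.symm ?_); simp; ring
  have hsqrt : HasDerivAt (fun p : ℝ => Real.sqrt (p*(1-p)))
      ((1-2*p) / (2 * Real.sqrt (p*(1-p)))) p := by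
    have := (Real.hasDerivAt_sqrt (x := p*(1-p)) (by nlinarith)).comp p hpoly
    refine this.congr_deriv (Eq.symm ?_)
    field_simp
  have hent := Real.hasDerivAt_binEntropy (p := p) (by positivity) (by linarith)
  have := ((hsqrt.const_mul (2 * Real.log 2)).sub hent)
  refine this.congr_deriv (Eq.symm ?_)
  unfold auxF1
  field_simp

lemma hasDerivAt_auxF1 (p : ℝ) (h0 : 0 < p) (h1 : p < 1) : HasDerivAt auxF1 (auxD p) p := by
  have hpq : 0 < p * (1-p) := by nlinarith
  have hs : 0 < Real.sqrt (p*(1-p)) := Real.sqrt_pos.2 hpq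
  have hsq : Real.sqrt (p*(1-p)) ^ 2 = p*(1-p) := Real.sq_sqrt hpq.le
  have hpoly : HasDerivAt (fun p : ℝ => p*(1-p)) (1-2*p) p := by
    have := (hasDerivAt_id p).mul ((hasDerivAt_const p (1:ℝ)).sub (hasDerivAt_id p))
    refine this.congr_deriv (Eq.symm ?_); simp; ring
  have hsqrt : HasDerivAt (fun p : ℝ => Real.sqrt (p*(1-p)))
      ((1-2*p) / (2 * Real.sqrt (p*(1-p)))) p := by
    have := (Real.hasDerivAt_sqrt (x := p*(1-p)) (by nlinarith)).comp p hpoly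
    refine this.congr_deriv (Eq.symm ?_)
    field_simp
  have hnum : HasDerivAt (fun p : ℝ => Real.log 2 * (1 - 2*p)) (Real.log 2 * (-2)) p := by
    have := (((hasDerivAt_const p (1:ℝ)).sub ((hasDerivAt_id p).const_mul 2)).const_mul (Real.log 2))
    simpa using this
  have hdiv : HasDerivAt (fun p : ℝ => Real.log 2 * (1 - 2*p) / Real.sqrt (p*(1-p)))
      ((Real.log 2 * -2 * Real.sqrt (p*(1-p)) -
        Real.log 2 * (1 - 2*p) * ((1-2*p) / (2 * Real.sqrt (p*(1-p)))))
        / (Real.sqrt (p*(1-p)))^2) p := hnum.div hsqrt hs.ne'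
  have hlog1 : HasDerivAt (fun p : ℝ => Real.log (1-p)) (-(1/(1-p))) p := by
    have h := (Real.hasDerivAt_log (x := 1-p) (by linarith)).comp p
      ((hasDerivAt_const p (1:ℝ)).sub (hasDerivAt_id p))
    refine h.congr_deriv (Eq.symm ?_); simp
  have hlog2 : HasDerivAt (fun p : ℝ => Real.log p) (1/p) p := by
    simpa using Real.hasDerivAt_log h0.ne'
  have := hdiv.sub (hlog1.sub hlog2)
  refine this.congr_deriv (Eq.symm ?_)
  unfold auxD
  set s := Real.sqrt (p*(1-p)) with hsdef
  have h1p : (1:ℝ) - p ≠ 0 := by linarith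
  have hp : p ≠ 0 := h0.ne'
  have hsne : s ≠ 0 := hs.ne'
  field_simp
  linear_combination (-(Real.log 2) * (1-2*p)^2) * hsq

lemma auxD_nonneg (x : ℝ) (hx : x ∈ Ioo auxP0 2⁻¹) : 0 ≤ auxD x := by
  obtain ⟨hx0, hx1⟩ := hx
  have h0 : 0 < x := lt_trans auxP0_pos hx0
  have h1 : x < 1 := by nlinarith
  have hpq : 0 < x * (1-x) := by nlinarith
  have hs : 0 < Real.sqrt (x*(1-x)) := Real.sqrt_pos.2 hpq
  have hsq : Real.sqrt (x*(1-x)) ^ 2 = x*(1-x) := Real.sq_sqrt hpq.le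
  have hkey : Real.log 2 ^ 2 < 4 * (x * (1-x)) := by
    have h2x : 1 - 2*x < Real.sqrt (1 - Real.log 2 ^ 2) := by
      unfold auxP0 at hx0; linarith
    have h2x0 : (0:ℝ) ≤ 1 - 2*x := by norm_num at hx1; linarith
    nlinarith [auxR_sq, auxR_pos]
  have hnum : 0 ≤ 2 * Real.sqrt (x*(1-x)) - Real.log 2 := by
    nlinarith [Real.log_pos one_lt_two]
  exact div_nonneg hnum (by positivity)

lemma auxD_nonpos (x : ℝ) (hx : x ∈ Ioo 0 auxP0) : auxD x ≤ 0 := by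
  obtain ⟨hx0, hx1⟩ := hx
  have h1 : x < 2⁻¹ := lt_trans hx1 auxP0_lt_half
  have h1' : x < 1 := by linarith
  have hpq : 0 < x * (1-x) := by nlinarith
  have hs : 0 < Real.sqrt (x*(1-x)) := Real.sqrt_pos.2 hpq
  have hsq : Real.sqrt (x*(1-x)) ^ 2 = x*(1-x) := Real.sq_sqrt hpq.le
  have hkey : 4 * (x * (1-x)) < Real.log 2 ^ 2 := by
    have h2x : Real.sqrt (1 - Real.log 2 ^ 2) < 1 - 2*x := by
      unfold auxP0 at hx1; linarith
    nlinarith [auxR_sq, auxR_pos]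
  have hnum : 2 * Real.sqrt (x*(1-x)) - Real.log 2 ≤ 0 := by
    nlinarith [Real.log_pos one_lt_two]
  exact div_nonpos_of_nonpos_of_nonneg hnum (by positivity)

lemma auxF1_half : auxF1 2⁻¹ = 0 := by norm_num [auxF1]

lemma auxF_half : auxF 2⁻¹ = 0 := by
  unfold auxF
  rw [show ((2:ℝ)⁻¹ * (1 - 2⁻¹)) = (2⁻¹)^2 by norm_num,
    Real.sqrt_sq (by norm_num : (0:ℝ) ≤ 2⁻¹), Real.binEntropy_two_inv]
  ring

lemma auxF_zero : auxF 0 = 0 := by simp [auxF]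

lemma auxF_continuous : Continuous auxF := by
  unfold auxF
  fun_prop

lemma auxF_nonneg_right (p : ℝ) (hp : p ∈ Icc auxP0 2⁻¹) : 0 ≤ auxF p := by
  have hmem : ∀ x ∈ Icc auxP0 2⁻¹, 0 < x ∧ x < 1 := by
    intro x hx
    constructor
    · exact lt_of_lt_of_le auxP0_pos hx.1
    · have := hx.2; norm_num at this ⊢; linarith
  -- F1 is monotone on [p₀, 1/2]
  have hmono : MonotoneOn auxF1 (Icc auxP0 2⁻¹) := by
    apply monotoneOn_of_hasDerivWithinAt_nonneg (convex_Icc _ _)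
      (fun x hx => ((hasDerivAt_auxF1 x (hmem x hx).1 (hmem x hx).2).continuousAt).continuousWithinAt)
      (f' := auxD)
    · intro x hx
      rw [interior_Icc] at hx
      exact (hasDerivAt_auxF1 x (hmem x (mem_Icc_of_Ioo hx)).1
        (hmem x (mem_Icc_of_Ioo hx)).2).hasDerivWithinAt
    · intro x hx
      rw [interior_Icc] at hx
      exact auxD_nonneg x hx
  have hhalf : (2:ℝ)⁻¹ ∈ Icc auxP0 2⁻¹ := ⟨auxP0_lt_half.le, le_refl _⟩
  have hF1nonpos : ∀ x ∈ Icc auxP0 2⁻¹, auxF1 x ≤ 0 := by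
    intro x hx
    have := hmono hx hhalf hx.2
    rwa [auxF1_half] at this
  have hanti : AntitoneOn auxF (Icc auxP0 2⁻¹) := by
    apply antitoneOn_of_hasDerivWithinAt_nonpos (convex_Icc _ _)
      (auxF_continuous.continuousOn) (f' := auxF1)
    · intro x hx
      rw [interior_Icc] at hx
      exact (hasDerivAt_auxF x (hmem x (mem_Icc_of_Ioo hx)).1
        (hmem x (mem_Icc_of_Ioo hx)).2).hasDerivWithinAt
    · intro x hx
      rw [interior_Icc] at hx
      exact hF1nonpos x (mem_Icc_of_Ioo hx)
  have := hanti hp hhalf hp.2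
  rwa [auxF_half] at this

lemma auxF_nonneg_left (p : ℝ) (hp : p ∈ Icc 0 auxP0) : 0 ≤ auxF p := by
  have hmem : ∀ x ∈ Ioo (0:ℝ) auxP0, 0 < x ∧ x < 1 := by
    intro x hx
    refine ⟨hx.1, ?_⟩
    have := hx.2
    have := auxP0_lt_half
    norm_num at this ⊢
    linarith
  -- F1 is antitone on (0, p₀)
  have hantiF1 : AntitoneOn auxF1 (Ioo 0 auxP0) := by
    apply antitoneOn_of_hasDerivWithinAt_nonpos (convex_Ioo _ _)
      (fun x hx => ((hasDerivAt_auxF1 x (hmem x hx).1 (hmem x hx).2).continuousAt).continuousWithinAt)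
      (f' := auxD)
    · intro x hx
      rw [interior_Ioo] at hx
      exact (hasDerivAt_auxF1 x (hmem x hx).1 (hmem x hx).2).hasDerivWithinAt
    · intro x hx
      rw [interior_Ioo] at hx
      exact auxD_nonpos x hx
  -- F is concave on [0, p₀]
  have hconc : ConcaveOn ℝ (Icc 0 auxP0) auxF := by
    apply AntitoneOn.concaveOn_of_deriv (convex_Icc _ _) (auxF_continuous.continuousOn)
    · rw [interior_Icc]
      exact fun x hx => (hasDerivAt_auxF x (hmem x hx).1 (hmem x hx).2).differentiableAt.differentiableWithinAt
    · rw [interior_Icc]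
      intro x hx y hy hxy
      rw [(hasDerivAt_auxF x (hmem x hx).1 (hmem x hx).2).deriv,
        (hasDerivAt_auxF y (hmem y hy).1 (hmem y hy).2).deriv]
      exact hantiF1 hx hy hxy
  have h0mem : (0:ℝ) ∈ Icc (0:ℝ) auxP0 := ⟨le_refl _, auxP0_pos.le⟩
  have hp0mem : auxP0 ∈ Icc (0:ℝ) auxP0 := ⟨auxP0_pos.le, le_refl _⟩
  have hseg : p ∈ segment ℝ (0:ℝ) auxP0 := by
    rw [segment_eq_Icc auxP0_pos.le]; exact hp
  have := hconc.ge_on_segment h0mem hp0mem hseg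
  have hFp0 : 0 ≤ auxF auxP0 := auxF_nonneg_right auxP0 ⟨le_refl _, auxP0_lt_half.le⟩
  rw [auxF_zero] at this
  exact le_trans (le_min (le_refl 0) hFp0) this

lemma auxF_one_sub (p : ℝ) : auxF (1 - p) = auxF p := by
  unfold auxF
  rw [Real.binEntropy_one_sub, show (1-p)*(1-(1-p)) = p*(1-p) by ring]

lemma auxF_nonneg (p : ℝ) (hp : p ∈ Icc (0:ℝ) 1) : 0 ≤ auxF p := by
  obtain ⟨h0, h1⟩ := hp
  rcases le_or_gt p 2⁻¹ with h | h
  · rcases le_or_gt p auxP0 with h' | h'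
    · exact auxF_nonneg_left p ⟨h0, h'⟩
    · exact auxF_nonneg_right p ⟨h'.le, h⟩
  · rw [← auxF_one_sub]
    rcases le_or_gt (1-p) auxP0 with h' | h'
    · exact auxF_nonneg_left (1-p) ⟨by linarith, h'⟩
    · refine auxF_nonneg_right (1-p) ⟨h'.le, ?_⟩
      norm_num at h ⊢
      linarith

/-- Arikan's inequality `I + Z ≥ 1` for a BSC: with symmetric capacity
`I = 1 − h₂(p)` and Bhattacharyya parameter `Z = 2√(p(1−p))`. -/
theorem bsc_I_add_Z_ge_one (p : ℝ) (hp : p ∈ Set.Icc (0:ℝ) 1) :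
    (1 - binEnt p) + 2 * Real.sqrt (p * (1 - p)) ≥ 1 := by
  have hL : 0 < Real.log 2 := Real.log_pos one_lt_two
  have hF := auxF_nonneg p hp
  unfold auxF at hF
  have hbe : binEnt p * Real.log 2 = Real.binEntropy p := by
    simp only [binEnt, Real.binEntropy, Real.logb, Real.log_inv]
    field_simp
    ring
  have : binEnt p ≤ 2 * Real.sqrt (p * (1 - p)) := by
    have h2 : binEnt p * Real.log 2 ≤ (2 * Real.sqrt (p * (1 - p))) * Real.log 2 := by
      rw [hbe]; nlinarith [hF]
    exact le_of_mul_le_mul_right h2 hL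
  linarith
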